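/- arXiv:1810.00228 — 4 statements merged into one kernel-verified Lean document; each statement's English description precedes it below -/
import Mathlib

section
/- Let G be a topological group, H a closed subgroup of G such that the quotient space G/H is compact, and L a closed subgroup of G such that the quotient space L/(L ∩ H) is compact. Then the subset L·H = {l*h : l ∈ L, h ∈ H} is closed in G. -/
open scoped Pointwise

/-- The coset space `G ⧸ H` is Hausdorff when `H` is closed. -/
theorem t2Space_quotient_of_isClosed {G : Type*} [Group G] [TopologicalSpace G]
    [IsTopologicalGroup G] (H : Subgroup G) (hH : IsClosed (H : Set G)) :
    T2Space (G ⧸ H) := by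
  rw [t2_iff_isClosed_diagonal, ← isOpen_compl_iff]
  set q : G × G → (G ⧸ H) × (G ⧸ H) := Prod.map QuotientGroup.mk QuotientGroup.mk with hq
  have hqsurj : Function.Surjective q :=
    (Quotient.mk''_surjective).prodMap (Quotient.mk''_surjective)
  have hqopen : IsOpenMap q :=
    (QuotientGroup.isOpenMap_coe).prodMap (QuotientGroup.isOpenMap_coe)
  have key : (Set.diagonal (G ⧸ H))ᶜ = q '' (q ⁻¹' (Set.diagonal (G ⧸ H))ᶜ) :=
    (Set.image_preimage_eq _ hqsurj).symm
  rw [key]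
  apply hqopen
  rw [Set.preimage_compl, isOpen_compl_iff]
  have : q ⁻¹' (Set.diagonal (G ⧸ H)) = {p : G × G | p.1⁻¹ * p.2 ∈ H} := by
    ext p
    simp only [Set.mem_preimage, Set.mem_diagonal_iff, hq, Prod.map, Set.mem_setOf_eq]
    exact QuotientGroup.eq
  rw [this]
  exact hH.preimage (by continuity : Continuous fun p : G × G => p.1⁻¹ * p.2)

/-- Let `G` be a (Hausdorff) topological group, `H` a closed subgroup
such that `G/H` is compact, and `L` a closed subgroup such that `L/(L ∩ H)` is compact.
Then the set `L * H = {l * h : l ∈ L, h ∈ H}` is closed in `G`. -/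
theorem closed_mul_of_uniform {G : Type*} [Group G] [TopologicalSpace G]
    [IsTopologicalGroup G] [T2Space G] (H L : Subgroup G)
    (hH : IsClosed (H : Set G)) (hL : IsClosed (L : Set G))
    (hGH : CompactSpace (G ⧸ H))
    (hLH : CompactSpace (L ⧸ H.subgroupOf L)) :
    IsClosed ((L : Set G) * (H : Set G)) := by
  haveI : T2Space (G ⧸ H) := t2Space_quotient_of_isClosed H hH
  -- the natural map `L ⧸ H.subgroupOf L → G ⧸ H`
  let f : L ⧸ H.subgroupOf L → G ⧸ H :=
    Quotient.map' (Subtype.val : L → G) (by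
      intro a b hab
      rw [QuotientGroup.leftRel_apply] at hab ⊢
      exact hab)
  have hfmk : ∀ x : L, f (QuotientGroup.mk x) = QuotientGroup.mk (x : G) := fun x => rfl
  have hfcont : Continuous f := by
    rw [(QuotientGroup.isQuotientMap_mk (H.subgroupOf L)).continuous_iff]
    exact (QuotientGroup.continuous_mk).comp continuous_subtype_val
  have hrange : Set.range f = QuotientGroup.mk '' (L : Set G) := by
    ext y
    constructor
    · rintro ⟨x, rfl⟩
      obtain ⟨l, rfl⟩ := Quotient.mk''_surjective x
      exact ⟨l, l.2, rfl⟩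
    · rintro ⟨g, hg, rfl⟩
      exact ⟨QuotientGroup.mk (⟨g, hg⟩ : L), rfl⟩
  have hcomp : IsCompact ((QuotientGroup.mk : G → G ⧸ H) '' (L : Set G)) := by
    rw [← hrange]
    exact isCompact_range hfcont
  have hclosed : IsClosed ((QuotientGroup.mk : G → G ⧸ H) '' (L : Set G)) := hcomp.isClosed
  have hpre : (QuotientGroup.mk : G → G ⧸ H) ⁻¹' (QuotientGroup.mk '' (L : Set G))
      = (L : Set G) * (H : Set G) := by
    ext x
    simp only [Set.mem_preimage, Set.mem_image]
    constructor
    · rintro ⟨l, hl, hlx⟩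
      have : l⁻¹ * x ∈ H := QuotientGroup.eq.mp hlx
      exact ⟨l, hl, l⁻¹ * x, this, by group⟩
    · rintro ⟨l, hl, h, hh, rfl⟩
      exact ⟨l, hl, QuotientGroup.eq.mpr (by simpa using hh)⟩
  rw [← hpre]
  exact hclosed.preimage QuotientGroup.continuous_mk
end

section
/- Let G be a topological group whose identity component G⁰ is open in G (for example, a Lie group), and let Γ be a discrete subgroup of G such that the quotient space G/Γ is compact. Then Γ ∩ G⁰ is a discrete subgroup of G⁰ and the quotient space G⁰/(Γ ∩ G⁰) is compact; that is, Γ ∩ G⁰ is a uniform lattice in G⁰. -/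
section Aux

variable {G : Type*} [Group G] [TopologicalSpace G] [IsTopologicalGroup G]

/-- The identity component is a normal subgroup. -/
theorem aux_connectedComponentOfOne_normal :
    (Subgroup.connectedComponentOfOne G).Normal := by
  constructor
  intro n hn g
  have hc : Continuous fun x : G => g * x * g⁻¹ := by continuity
  have h := hc.mapsTo_connectedComponent 1 hn
  simp at h
  exact h

end Aux

/-- Let `G` be a topological group whose identity component `G⁰` is open
(e.g. a Lie group), and `Γ` a discrete subgroup of `G` with `G/Γ` compact. Then
`Γ ∩ G⁰` is a discrete subgroup of `G⁰` and `G⁰/(Γ ∩ G⁰)` is compact, i.e. `Γ ∩ G⁰`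
is a uniform lattice in `G⁰`. -/
theorem lattice_in_identity_component {G : Type*} [Group G] [TopologicalSpace G]
    [IsTopologicalGroup G] [T2Space G]
    (hopen : IsOpen ((Subgroup.connectedComponentOfOne G : Subgroup G) : Set G))
    (Γ : Subgroup G) [DiscreteTopology Γ] (hGΓ : CompactSpace (G ⧸ Γ)) :
    DiscreteTopology (Γ.subgroupOf (Subgroup.connectedComponentOfOne G)) ∧
      CompactSpace ((Subgroup.connectedComponentOfOne G) ⧸
        Γ.subgroupOf (Subgroup.connectedComponentOfOne G)) := by
  set N : Subgroup G := Subgroup.connectedComponentOfOne G with hNdef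
  haveI hnorm : N.Normal := aux_connectedComponentOfOne_normal
  set Γ' : Subgroup N := Γ.subgroupOf N with hΓ'def
  -- Part 1 : discreteness
  have hdisc : DiscreteTopology Γ' := by
    have hemb : Topology.IsEmbedding (fun x : Γ' => (⟨(x.1 : G), x.2⟩ : Γ)) := by
      have h1 : Topology.IsEmbedding (fun x : Γ' => ((x.1 : G))) :=
        Topology.IsEmbedding.subtypeVal.comp Topology.IsEmbedding.subtypeVal
      exact Topology.IsEmbedding.of_comp (by fun_prop) continuous_subtype_val h1
    exact hemb.discreteTopology
  refine ⟨hdisc, ?_⟩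
  -- Part 2 : compactness
  -- the saturation of N is the open (hence closed) subgroup N ⊔ Γ
  have hopenNΓ : IsOpen ((N ⊔ Γ : Subgroup G) : Set G) :=
    Subgroup.isOpen_mono le_sup_left hopen
  have hclosedNΓ : IsClosed ((N ⊔ Γ : Subgroup G) : Set G) :=
    Subgroup.isClosed_of_isOpen _ hopenNΓ
  have key : (QuotientGroup.mk : G → G ⧸ Γ) ⁻¹' (QuotientGroup.mk '' (N : Set G)) =
      ((N ⊔ Γ : Subgroup G) : Set G) := by
    rw [Subgroup.normal_mul]
    ext x
    constructor
    · rintro ⟨n, hn, hnx⟩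
      have h : n⁻¹ * x ∈ Γ := QuotientGroup.eq.mp hnx
      exact ⟨n, hn, n⁻¹ * x, h, by group⟩
    · rintro ⟨n, hn, γ, hγ, rfl⟩
      refine ⟨n, hn, QuotientGroup.eq.mpr ?_⟩
      simpa using hγ
  have hopenS : IsOpen (QuotientGroup.mk '' (N : Set G) : Set (G ⧸ Γ)) := by
    rw [← (QuotientGroup.isQuotientMap_mk Γ).isOpen_preimage, key]; exact hopenNΓ
  have hclosedS : IsClosed (QuotientGroup.mk '' (N : Set G) : Set (G ⧸ Γ)) := by
    rw [← (QuotientGroup.isQuotientMap_mk Γ).isClosed_preimage, key]; exact hclosedNΓ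
  -- the induced map φ : N ⧸ Γ' → G ⧸ Γ
  have hresp : ∀ a b : N, QuotientGroup.leftRel Γ' a b →
      (QuotientGroup.mk (a : G) : G ⧸ Γ) = QuotientGroup.mk (b : G) := by
    intro a b hab
    have hab' : a⁻¹ * b ∈ Γ' := QuotientGroup.leftRel_apply.mp hab
    have hab'' : (a : G)⁻¹ * (b : G) ∈ Γ := by
      have := Subgroup.mem_subgroupOf.mp hab'
      simpa using this
    exact QuotientGroup.eq.mpr hab''
  let φ : (N ⧸ Γ') → G ⧸ Γ :=
    fun x => Quotient.liftOn' x (fun n : N => QuotientGroup.mk (n : G)) hresp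
  have hφ_mk : ∀ n : N, φ (QuotientGroup.mk n) = QuotientGroup.mk (n : G) := fun n => rfl
  have hφ_cont : Continuous φ := by
    rw [(QuotientGroup.isQuotientMap_mk Γ').continuous_iff]
    exact QuotientGroup.continuous_mk.comp continuous_subtype_val
  have hφ_inj : Function.Injective φ := by
    intro x y
    induction x using Quotient.inductionOn'
    induction y using Quotient.inductionOn'
    rename_i a b
    intro hab
    have h : (a : G)⁻¹ * (b : G) ∈ Γ := QuotientGroup.eq.mp hab
    exact Quotient.sound' (QuotientGroup.leftRel_apply.mpr h)
  have hφ_range : Set.range φ = QuotientGroup.mk '' (N : Set G) := by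
    ext y
    constructor
    · rintro ⟨x, rfl⟩
      induction x using Quotient.inductionOn'
      rename_i n
      exact ⟨(n : G), n.2, rfl⟩
    · rintro ⟨g, hg, rfl⟩
      exact ⟨QuotientGroup.mk (⟨g, hg⟩ : N), rfl⟩
  have hφ_open : IsOpenMap φ := by
    intro U hU
    have himg : φ '' U = QuotientGroup.mk ''
        (Subtype.val '' ((QuotientGroup.mk : N → N ⧸ Γ') ⁻¹' U)) := by
      ext y
      constructor
      · rintro ⟨x, hx, rfl⟩
        induction x using Quotient.inductionOn'
        rename_i n
        exact ⟨(n : G), ⟨n, hx, rfl⟩, rfl⟩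
      · rintro ⟨g, ⟨n, hn, rfl⟩, rfl⟩
        exact ⟨QuotientGroup.mk n, hn, rfl⟩
    rw [himg]
    exact QuotientGroup.isOpenMap_coe _
      (hopen.isOpenMap_subtype_val _ (QuotientGroup.continuous_mk.isOpen_preimage U hU))
  have hφ_emb : Topology.IsClosedEmbedding φ := by
    refine ⟨(Topology.IsOpenEmbedding.of_continuous_injective_isOpenMap
      hφ_cont hφ_inj hφ_open).toIsEmbedding, ?_⟩
    rw [hφ_range]
    exact hclosedS
  exact hφ_emb.compactSpace
end

section
/- Let G be a topological group acting continuously and properly on a locally compact Hausdorff space X, and let Γ be a discrete subgroup of G such that the orbit space X/Γ is compact. Then the coset space G/Γ is compact; that is, Γ is a uniform lattice in G. -/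
/-- Let `G` be a topological group acting continuously and properly on a
(nonempty) locally compact Hausdorff space `X`, and let `Γ` be a discrete subgroup of `G`
such that the orbit space `X/Γ` is compact. Then `G/Γ` is compact; that is, `Γ` is a
uniform lattice in `G`. -/
theorem compactSpace_quotient_of_compact_orbit_quotient {G : Type*} [Group G]
    [TopologicalSpace G] [IsTopologicalGroup G] {X : Type*} [TopologicalSpace X]
    [T2Space X] [LocallyCompactSpace X] [Nonempty X]
    [MulAction G X] [ContinuousSMul G X] [ProperSMul G X]
    (Γ : Subgroup G) [DiscreteTopology Γ]
    (hXΓ : CompactSpace (Quotient (MulAction.orbitRel Γ X))) :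
    CompactSpace (G ⧸ Γ) := by
  classical
  set q : X → Quotient (MulAction.orbitRel Γ X) := Quotient.mk _ with hq
  -- Step 1: find a compact set K ⊆ X whose image in X/Γ is everything.
  obtain ⟨K, hKcomp, hKsurj⟩ : ∃ K : Set X, IsCompact K ∧ q '' K = Set.univ := by
    choose Kf hKc hKn using fun x : X => exists_compact_mem_nhds x
    have hopen : ∀ x : X, IsOpen (q '' interior (Kf x)) :=
      fun x => (MulAction.isOpenQuotientMap_quotientMk).isOpenMap _ isOpen_interior
    have hcov : Set.univ ⊆ ⋃ x : X, q '' interior (Kf x) := by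
      rintro y -
      obtain ⟨x, rfl⟩ := Quotient.exists_rep y
      exact Set.mem_iUnion.mpr ⟨x, ⟨x, mem_interior_iff_mem_nhds.mpr (hKn x), rfl⟩⟩
    obtain ⟨t, ht⟩ := isCompact_univ.elim_finite_subcover _ hopen hcov
    refine ⟨⋃ x ∈ t, Kf x, t.isCompact_biUnion (fun x _ => hKc x), ?_⟩
    apply Set.eq_univ_of_univ_subset
    refine ht.trans ?_
    rintro y hy
    obtain ⟨x, hx, z, hz, rfl⟩ := Set.mem_iUnion₂.mp hy
    exact ⟨z, Set.mem_biUnion hx (interior_subset hz), rfl⟩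
  obtain ⟨x₀⟩ := ‹Nonempty X›
  set K₀ : Set X := K ∪ {x₀} with hK₀
  have hK₀comp : IsCompact K₀ := hKcomp.union isCompact_singleton
  -- Step 2: S = {g | g • K₀ ∩ K₀ ≠ ∅} is compact.
  set S : Set G :=
    Prod.fst '' ((fun gx : G × X => (gx.1 • gx.2, gx.2)) ⁻¹' (K₀ ×ˢ K₀)) with hS
  have hScomp : IsCompact S :=
    (ProperSMul.isProperMap_smul_pair.isCompact_preimage
      (hK₀comp.prod hK₀comp)).image continuous_fst
  have hmem : ∀ g : G, g • x₀ ∈ K₀ → g ∈ S := fun g hg =>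
    ⟨(g, x₀), ⟨hg, Set.mem_union_right _ rfl⟩, rfl⟩
  -- Step 3: G ⧸ Γ is the image of the compact set S⁻¹ under the quotient map.
  rw [← isCompact_univ_iff]
  have hsurj : (Set.univ : Set (G ⧸ Γ)) ⊆ (QuotientGroup.mk : G → G ⧸ Γ) '' S⁻¹ := by
    rintro y -
    obtain ⟨g, rfl⟩ := QuotientGroup.mk_surjective y
    have hmemq : q (g⁻¹ • x₀) ∈ q '' K := by rw [hKsurj]; trivial
    obtain ⟨k, hk, hqk⟩ := hmemq
    have hrel : k ∈ MulAction.orbit Γ (g⁻¹ • x₀) :=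
      (MulAction.orbitRel_apply).mp (Quotient.exact hqk)
    obtain ⟨γ, hγ⟩ := hrel
    have h1 : ((γ : G) * g⁻¹) • x₀ = k := by
      rw [mul_smul]; exact hγ
    have h2 : (γ : G) * g⁻¹ ∈ S := hmem _ (h1 ▸ Set.mem_union_left _ hk)
    refine ⟨((γ : G) * g⁻¹)⁻¹, by simpa using h2, ?_⟩
    rw [QuotientGroup.eq]
    simp [mul_assoc]
  have hcont : Continuous (QuotientGroup.mk : G → G ⧸ Γ) := continuous_quotient_mk'
  have himg := hScomp.inv.image hcont
  rw [← Set.eq_univ_of_univ_subset hsurj]; exact himg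
end

section
/- Let G be a locally compact Hausdorff topological group, Γ a discrete subgroup of G such that the quotient space G/Γ is compact, and N a closed normal subgroup of G such that the quotient space N/(N ∩ Γ) is compact. Then the image of Γ under the quotient homomorphism ν : G → G/N is a discrete subgroup of G/N, and the quotient space (G/N)/ν(Γ) is compact; that is, ν(Γ) is a uniform lattice in G/N. -/
open Set Pointwise

lemma exists_compact_covering' {H : Type*} [Group H] [TopologicalSpace H] [IsTopologicalGroup H]
    [LocallyCompactSpace H] (Δ : Subgroup H) (hc : CompactSpace (H ⧸ Δ)) :
    ∃ K : Set H, IsCompact K ∧ ∀ h : H, ∃ k ∈ K, ∃ d ∈ Δ, h = k * d := by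
  choose C hCcomp hCmem using fun g : H => exists_compact_mem_nhds g
  have hcover : (univ : Set (H ⧸ Δ)) ⊆ ⋃ g : H, (QuotientGroup.mk '' interior (C g)) := by
    rintro x -
    obtain ⟨g, rfl⟩ := QuotientGroup.mk_surjective x
    exact mem_iUnion.2 ⟨g, mem_image_of_mem _ (mem_interior_iff_mem_nhds.2 (hCmem g))⟩
  obtain ⟨t, ht⟩ := isCompact_univ.elim_finite_subcover _
    (fun g => QuotientGroup.isOpenMap_coe _ isOpen_interior) hcover
  refine ⟨⋃ g ∈ t, C g, t.isCompact_biUnion (fun g _ => hCcomp g), fun h => ?_⟩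
  obtain ⟨g, hg, c, hc', hch⟩ := by
    simpa using ht (mem_univ (QuotientGroup.mk h : H ⧸ Δ))
  refine ⟨c, mem_biUnion hg (interior_subset hc'), c⁻¹ * h, ?_, by group⟩
  exact (QuotientGroup.eq).1 hch


/-- Let `G` be a locally compact Hausdorff topological group, `Γ` a
discrete subgroup with `G/Γ` compact, and `N` a closed normal subgroup such that
`N/(N ∩ Γ)` is compact. Then the image `ν(Γ)` of `Γ` under the quotient map
`ν : G → G/N` is a discrete subgroup of `G/N` and `(G/N)/ν(Γ)` is compact; that is,
`ν(Γ)` is a uniform lattice in `G/N`. -/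
theorem image_lattice_of_cocompact_normal {G : Type*} [Group G] [TopologicalSpace G]
    [IsTopologicalGroup G] [T2Space G] [LocallyCompactSpace G]
    (Γ : Subgroup G) [DiscreteTopology Γ] (hGΓ : CompactSpace (G ⧸ Γ))
    (N : Subgroup G) [N.Normal] (hN : IsClosed (N : Set G))
    (hNΓ : CompactSpace (N ⧸ Γ.subgroupOf N)) :
    DiscreteTopology (Γ.map (QuotientGroup.mk' N)) ∧
      CompactSpace ((G ⧸ N) ⧸ Γ.map (QuotientGroup.mk' N)) := by
  set Γ' := Γ.map (QuotientGroup.mk' N) with hΓ'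
  -- Step 1: a compact set K ⊆ N with K · (N ∩ Γ) = N
  haveI : LocallyCompactSpace N := hN.locallyCompactSpace
  obtain ⟨K₀, hK₀c, hK₀⟩ := exists_compact_covering' (Γ.subgroupOf N) hNΓ
  set K : Set G := (↑) '' K₀ with hKdef
  have hKc : IsCompact K := hK₀c.image continuous_subtype_val
  have hKN : K ⊆ (N : Set G) := by rintro x ⟨y, -, rfl⟩; exact y.2
  have hKcov : ∀ n ∈ N, ∃ k ∈ K, ∃ δ, δ ∈ N ∧ δ ∈ Γ ∧ n = k * δ := by
    intro n hn
    obtain ⟨k, hk, d, hd, hnd⟩ := hK₀ ⟨n, hn⟩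
    exact ⟨k, mem_image_of_mem _ hk, d, d.2, hd, congrArg Subtype.val hnd⟩
  -- Step 2: discreteness
  obtain ⟨V, hV, hVΓ⟩ : ∃ V : Set G, V ∈ nhds (1 : G) ∧ V ∩ (Γ : Set G) = {1} :=
    nhds_inter_eq_singleton_of_mem_discrete (isDiscrete_iff_discreteTopology.mpr ‹_›) Γ.one_mem
  obtain ⟨C₀, hC₀c, hC₀⟩ := exists_compact_mem_nhds (1 : G)
  -- F = Γ ∩ C₀K is finite
  have hF : Set.Finite ((C₀ * K) ∩ (Γ : Set G)) := by
    have hcpt : IsCompact ((C₀ * K) ∩ (Γ : Set G)) :=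
      (hC₀c.mul hKc).inter_right Subgroup.isClosed_of_discrete
    haveI : DiscreteTopology ((C₀ * K) ∩ (Γ : Set G) : Set G) :=
      DiscreteTopology.of_subset (inferInstance : DiscreteTopology (Γ : Set G))
        inter_subset_right
    exact hcpt.finite (isDiscrete_iff_discreteTopology.mpr inferInstance)
  set Fbad := ((C₀ * K) ∩ (Γ : Set G)) \ (N : Set G) with hFbad
  have hFbadfin : Fbad.Finite := hF.diff
  have hexU : ∀ γ : G, ∃ U : Set G, IsOpen U ∧ (1 : G) ∈ U ∧
      (γ ∈ Fbad → ∀ k ∈ K, γ * k⁻¹ ∉ U) := by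
    intro γ
    by_cases hγ : γ ∈ Fbad
    · have hScpt : IsCompact ((fun k => γ * k⁻¹) '' K) := hKc.image (by continuity)
      have hone : (1 : G) ∉ (fun k => γ * k⁻¹) '' K := by
        rintro ⟨k, hk, hk1⟩
        have hgk : γ = k := by
          have := mul_inv_eq_one.mp hk1; exact this
        exact hγ.2 (hgk ▸ hKN hk)
      refine ⟨((fun k => γ * k⁻¹) '' K)ᶜ, hScpt.isClosed.isOpen_compl, hone, ?_⟩
      intro _ k hk hmem
      exact hmem (mem_image_of_mem _ hk)
    · exact ⟨univ, isOpen_univ, mem_univ _, fun h => absurd h hγ⟩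
  choose U hUopen hUone hUavoid using hexU
  set W : Set G := interior C₀ ∩ ⋂ γ ∈ Fbad, U γ with hW
  have hWopen : IsOpen W := isOpen_interior.inter (hFbadfin.isOpen_biInter fun γ _ => hUopen γ)
  have hWone : (1 : G) ∈ W :=
    ⟨mem_interior_iff_mem_nhds.2 hC₀, mem_iInter₂.2 fun γ _ => hUone γ⟩
  -- key: Γ ∩ W·N ⊆ N
  have hkey : ∀ γ ∈ Γ, ∀ w ∈ W, ∀ n ∈ N, γ = w * n → γ ∈ N := by
    intro γ hγ w hw n hn heq
    obtain ⟨k, hk, δ, hδN, hδΓ, hnk⟩ := hKcov n hn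
    have heq2 : γ * δ⁻¹ = w * k := by rw [heq, hnk]; group
    have hγδ : γ * δ⁻¹ ∈ (C₀ * K) ∩ (Γ : Set G) := by
      refine ⟨heq2 ▸ mul_mem_mul (interior_subset hw.1) hk, Γ.mul_mem hγ (Γ.inv_mem hδΓ)⟩
    by_contra hγN
    have hbad : γ * δ⁻¹ ∈ Fbad := by
      refine ⟨hγδ, fun h => hγN ?_⟩
      have hre : γ = (γ * δ⁻¹) * δ := by group
      rw [hre]; exact N.mul_mem h hδN
    have hwU : w ∈ U (γ * δ⁻¹) := (mem_iInter₂.1 hw.2) _ hbad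
    have hwf : (γ * δ⁻¹) * k⁻¹ = w := by rw [heq2]; group
    exact hUavoid _ hbad k hk (hwf ▸ hwU)
  constructor
  · -- discreteness
    rw [discreteTopology_iff_isOpen_singleton_one]
    have hWN : IsOpen (QuotientGroup.mk '' W : Set (G ⧸ N)) :=
      QuotientGroup.isOpenMap_coe _ hWopen
    have hset : ({1} : Set Γ') = (Subtype.val) ⁻¹' (QuotientGroup.mk '' W) := by
      ext x
      simp only [mem_singleton_iff, mem_preimage]
      constructor
      · rintro rfl; exact ⟨1, hWone, rfl⟩
      · rintro ⟨w, hw, hwx⟩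
        obtain ⟨γ, hγ, hγx⟩ := Subgroup.mem_map.1 x.2
        have hmkeq : (QuotientGroup.mk γ : G ⧸ N) = QuotientGroup.mk w := by
          rw [← hwx] at hγx; exact hγx
        have hwn : w⁻¹ * γ ∈ N := QuotientGroup.eq.1 hmkeq.symm
        have hγN : γ ∈ N := hkey γ hγ w hw _ hwn (by group)
        have hx1 : (x : G ⧸ N) = 1 := by
          rw [← hγx]; exact (QuotientGroup.eq_one_iff γ).2 hγN
        exact Subtype.ext hx1
    rw [hset]
    exact hWN.preimage continuous_subtype_val
  · -- compactness
    have hcst : ∀ (a b : G), (QuotientGroup.leftRel Γ) a b →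
        (QuotientGroup.mk (QuotientGroup.mk' N a) : (G ⧸ N) ⧸ Γ') =
          QuotientGroup.mk (QuotientGroup.mk' N b) := by
      intro a b hab
      rw [QuotientGroup.leftRel_apply] at hab
      refine QuotientGroup.eq.2 ?_
      refine Subgroup.mem_map.2 ⟨a⁻¹ * b, hab, ?_⟩
      simp [map_mul]
    let f : G ⧸ Γ → (G ⧸ N) ⧸ Γ' := Quotient.lift _ hcst
    have hcont : Continuous f :=
      Continuous.quotient_lift (continuous_quot_mk.comp (QuotientGroup.continuous_mk)) _
    have hsurj : Function.Surjective f := by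
      intro x
      obtain ⟨y, rfl⟩ := QuotientGroup.mk_surjective x
      obtain ⟨g, rfl⟩ := QuotientGroup.mk_surjective y
      exact ⟨QuotientGroup.mk g, rfl⟩
    exact ⟨by rw [← hsurj.range_eq]; exact isCompact_range hcont⟩
end
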